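/- In the setting of the dimension embedding reduction, let S be a solution of I(Π,F), let T = {ℓ ∈ [r] : Σ_{(v,σ)∈S} J(ℓ,v) = N_ℓ}, for j ∈ D let ℓ(j) denote the unique index with j ∈ D_{ℓ(j)}, let V* = {v ∈ V(G) : ℓ(x) ∈ T for every x ∈ Adj_G(v) ∪ {v}}, and for v ∈ V* let σ_v be the unique symbol with (v, σ_v) ∈ S. Then the partial assignment φ defined by φ(v) = σ_v for v ∈ V* and φ(v) = ⊥ otherwise is a consistent partial assignment for Π. -/

import Mathlib

/-- An R-CSP instance: a finite simple directed graph (irreflexive and antisymmetric edge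
set `E ⊆ V × V`), an alphabet `S`, a value alphabet `Υ = {1,…,m}` with `m > 0`, and for
each edge `e = (u,v) ∈ E` two maps `π_{e,u}, π_{e,v} : S → {1,…,m}` (called `pifst e` and
`pisnd e` respectively). -/
structure RCSP (V S : Type) [Fintype V] [DecidableEq V] [Fintype S] [DecidableEq S] where
  E : Finset (V × V)
  ne_of_mem : ∀ e ∈ E, e.1 ≠ e.2
  antisymm : ∀ u v : V, (u, v) ∈ E → (v, u) ∉ E
  m : ℕ
  m_pos : 0 < m
  pifst : V × V → S → ℕ
  pisnd : V × V → S → ℕ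
  pifst_pos : ∀ e ∈ E, ∀ σ : S, 1 ≤ pifst e σ
  pifst_le : ∀ e ∈ E, ∀ σ : S, pifst e σ ≤ m
  pisnd_pos : ∀ e ∈ E, ∀ σ : S, 1 ≤ pisnd e σ
  pisnd_le : ∀ e ∈ E, ∀ σ : S, pisnd e σ ≤ m

namespace RCSP

variable {V S : Type} [Fintype V] [DecidableEq V] [Fintype S] [DecidableEq S]

/-- A partial assignment `φ : V → S ∪ {⊥}` is consistent if for every edge `e = (u,v)`
with both endpoints assigned, `π_{e,u}(φ u) = π_{e,v}(φ v)`. -/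
def Consistent (P : RCSP V S) (φ : V → Option S) : Prop :=
  ∀ e ∈ P.E, ∀ a b : S, φ e.1 = some a → φ e.2 = some b → P.pifst e a = P.pisnd e b

/-- The size of a partial assignment: the number of vertices assigned a value. -/
def size (φ : V → Option S) : ℕ := (Finset.univ.filter fun v : V => (φ v).isSome).card

/-- The set `Adj_G(v)` of edges incident to the vertex `v`. -/
def adj (P : RCSP V S) (v : V) : Finset (V × V) :=
  P.E.filter fun e => e.1 = v ∨ e.2 = v

/-- The set of constraints `D = V(G) ∪ E(G)`, as a finset of `V ⊕ (V × V)`. -/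
def Dset (P : RCSP V S) : Finset (V ⊕ (V × V)) :=
  Finset.univ.image Sum.inl ∪ P.E.image Sum.inr

/-- The block `D_ℓ` of the partition of `D` determined by the index function `idx`
(assigning to each constraint the index of its block). -/
def Dblock (P : RCSP V S) {r : ℕ} (idx : V ⊕ (V × V) → Fin r) (ℓ : Fin r) :
    Finset (V ⊕ (V × V)) :=
  P.Dset.filter fun j => idx j = ℓ

/-- `J(ℓ,v)`: the number of constraints in `D_ℓ` in which `v` participates, namely
`|Adj_G(v) ∩ D_ℓ|`, plus one if `v ∈ D_ℓ`. -/
def J (P : RCSP V S) {r : ℕ} (idx : V ⊕ (V × V) → Fin r) (ℓ : Fin r) (v : V) : ℕ :=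
  ((P.adj v).filter fun e => idx (Sum.inr e) = ℓ).card +
    if idx (Sum.inl v) = ℓ then 1 else 0

/-- `N_ℓ = Σ_{v ∈ V(G)} J(ℓ,v)`. -/
def N (P : RCSP V S) {r : ℕ} (idx : V ⊕ (V × V) → Fin r) (ℓ : Fin r) : ℕ :=
  ∑ v : V, P.J idx ℓ v

/-- The profit of a set of items: `p(v,σ) = Σ_{ℓ ∈ [r]} J(ℓ,v)`, summed over the set. -/
def profit (P : RCSP V S) {r : ℕ} (idx : V ⊕ (V × V) → Fin r)
    (Sol : Finset (V × S)) : ℕ :=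
  ∑ i ∈ Sol, ∑ ℓ : Fin r, P.J idx ℓ i.1

/-- `Q = 3 · F² · m · |V(G)| · |Σ|`. -/
def Q (P : RCSP V S) (F : ℕ) : ℕ :=
  3 * F ^ 2 * P.m * Fintype.card V * Fintype.card S

/-- `M = Q^{2F}`. -/
def Mbig (P : RCSP V S) (F : ℕ) : ℕ := P.Q F ^ (2 * F)

/-- The auxiliary weights `w_j(v,σ)` for constraints `j ∈ D`:
`w_v(v,σ) = m`; for an edge `e ∈ E`, `w_e(v,σ) = π_{e,v}(σ)` if `v` is the first endpoint
of `e`, and `w_e(v,σ) = m − π_{e,v}(σ)` if `v` is the second endpoint; all other weights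
vanish. -/
def ew (P : RCSP V S) : V ⊕ (V × V) → V × S → ℕ
  | Sum.inl u, (v, _) => if v = u then P.m else 0
  | Sum.inr e, (v, σ) =>
      if e ∈ P.E then
        if e.1 = v then P.pifst e σ else if e.2 = v then P.m - P.pisnd e σ else 0
      else 0

/-- The cost in dimension `(ℓ,1)`: `c_{(ℓ,1)}(i) = Σ_{j ∈ D_ℓ} w_j(i) · Q^{ord_ℓ(j)}`. -/
def cost1 (P : RCSP V S) (F : ℕ) {r : ℕ} (idx : V ⊕ (V × V) → Fin r)
    (ord : V ⊕ (V × V) → ℕ) (ℓ : Fin r) (i : V × S) : ℕ :=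
  ∑ j ∈ P.Dblock idx ℓ, P.ew j i * P.Q F ^ ord j

/-- The cost in dimension `(ℓ,2)`: `c_{(ℓ,2)}(v,σ) = M · J(ℓ,v) − c_{(ℓ,1)}(v,σ)`. -/
def cost2 (P : RCSP V S) (F : ℕ) {r : ℕ} (idx : V ⊕ (V × V) → Fin r)
    (ord : V ⊕ (V × V) → ℕ) (ℓ : Fin r) (i : V × S) : ℕ :=
  P.Mbig F * P.J idx ℓ i.1 - P.cost1 F idx ord ℓ i

/-- The budget in dimension `(ℓ,1)`: `B_{(ℓ,1)} = Σ_{j ∈ D_ℓ} m · Q^{ord_ℓ(j)}`. -/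
def budget1 (P : RCSP V S) (F : ℕ) {r : ℕ} (idx : V ⊕ (V × V) → Fin r)
    (ord : V ⊕ (V × V) → ℕ) (ℓ : Fin r) : ℕ :=
  ∑ j ∈ P.Dblock idx ℓ, P.m * P.Q F ^ ord j

/-- The budget in dimension `(ℓ,2)`: `B_{(ℓ,2)} = M · N_ℓ − B_{(ℓ,1)}`. -/
def budget2 (P : RCSP V S) (F : ℕ) {r : ℕ} (idx : V ⊕ (V × V) → Fin r)
    (ord : V ⊕ (V × V) → ℕ) (ℓ : Fin r) : ℕ :=
  P.Mbig F * P.N idx ℓ - P.budget1 F idx ord ℓ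

/-- A solution of the knapsack instance `I(Π,F)` produced by the dimension embedding
reduction: a set of items respecting the budgets in all `2r` dimensions. -/
def IsEmbedSolution (P : RCSP V S) (F : ℕ) {r : ℕ} (idx : V ⊕ (V × V) → Fin r)
    (ord : V ⊕ (V × V) → ℕ) (Sol : Finset (V × S)) : Prop :=
  (∀ ℓ : Fin r, ∑ i ∈ Sol, P.cost1 F idx ord ℓ i ≤ P.budget1 F idx ord ℓ) ∧
  (∀ ℓ : Fin r, ∑ i ∈ Sol, P.cost2 F idx ord ℓ i ≤ P.budget2 F idx ord ℓ)

/-- The index `ℓ ∈ [r]` is tight for `Sol` if `Σ_{(v,σ) ∈ Sol} J(ℓ,v) = N_ℓ`. -/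
def Tight (P : RCSP V S) {r : ℕ} (idx : V ⊕ (V × V) → Fin r)
    (Sol : Finset (V × S)) (ℓ : Fin r) : Prop :=
  ∑ i ∈ Sol, P.J idx ℓ i.1 = P.N idx ℓ

/-- `v ∈ V*`: every constraint `x ∈ Adj_G(v) ∪ {v}` lies in a tight block, i.e.
`ℓ(x) ∈ T` where `ℓ(x)` is the index of the block containing `x`. -/
def InVstar (P : RCSP V S) {r : ℕ} (idx : V ⊕ (V × V) → Fin r)
    (Sol : Finset (V × S)) (v : V) : Prop :=
  P.Tight idx Sol (idx (Sum.inl v)) ∧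
    ∀ e ∈ P.adj v, P.Tight idx Sol (idx (Sum.inr e))

/-- The hypotheses of the dimension embedding reduction: the constraint graph is
3-regular, `F ∈ [|V(G)|]`, the blocks `D_1,…,D_r` partition `D` (automatic, since `idx`
is a function on `D`) with `|D_ℓ| ≤ F`, and for each `ℓ` the map `ord` restricts to a
bijection `D_ℓ → {1,…,|D_ℓ|}`. -/
def EmbedSetting (P : RCSP V S) (F : ℕ) {r : ℕ} (idx : V ⊕ (V × V) → Fin r)
    (ord : V ⊕ (V × V) → ℕ) : Prop :=
  (∀ v : V, (P.adj v).card = 3) ∧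
  1 ≤ F ∧ F ≤ Fintype.card V ∧
  (∀ ℓ : Fin r, (P.Dblock idx ℓ).card ≤ F) ∧
  (∀ ℓ : Fin r, Set.BijOn ord (P.Dblock idx ℓ : Set (V ⊕ (V × V)))
    (Set.Icc 1 ((P.Dblock idx ℓ).card)))

end RCSP


lemma digits_unique (Q : ℕ) : ∀ (n : ℕ) (a b : ℕ → ℕ),
    (∀ t, t < n → a t < Q) → (∀ t, t < n → b t < Q) →
    ((Finset.range n).sum (fun t => a t * Q ^ t) =
      (Finset.range n).sum (fun t => b t * Q ^ t)) →
    ∀ t, t < n → a t = b t := by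
  intro n
  induction n with
  | zero => intro a b _ _ _ t ht; omega
  | succ n ih =>
    intro a b ha hb h t ht
    have hQ : 0 < Q := lt_of_le_of_lt (Nat.zero_le _) (ha 0 (Nat.succ_pos n))
    rw [Finset.sum_range_succ', Finset.sum_range_succ'] at h
    simp only [pow_succ, pow_zero, one_mul, mul_one, ← mul_assoc] at h
    rw [← Finset.sum_mul, ← Finset.sum_mul] at h
    have h0 : a 0 = b 0 := by
      have h1 := congrArg (· % Q) h
      rw [Nat.mul_add_mod', Nat.mul_add_mod',
        Nat.mod_eq_of_lt (ha 0 (Nat.succ_pos n)),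
        Nat.mod_eq_of_lt (hb 0 (Nat.succ_pos n))] at h1
      exact h1
    rw [h0] at h
    have h2 : (Finset.range n).sum (fun t => a (t+1) * Q ^ t) =
        (Finset.range n).sum (fun t => b (t+1) * Q ^ t) :=
      Nat.eq_of_mul_eq_mul_right hQ (Nat.add_right_cancel h)
    have h3 := ih (fun t => a (t+1)) (fun t => b (t+1))
      (fun t ht => ha (t+1) (by omega)) (fun t ht => hb (t+1) (by omega)) h2
    match t with
    | 0 => exact h0
    | t + 1 => exact h3 t (by omega)

section Aux

variable {V S : Type} [Fintype V] [DecidableEq V] [Fintype S] [DecidableEq S]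

/-- whether constraint `j` involves vertex `v` -/
def touches (v : V) : V ⊕ (V × V) → Bool := fun j =>
  match j with
  | Sum.inl u => decide (u = v)
  | Sum.inr e => decide (e.1 = v) || decide (e.2 = v)

lemma ew_le_m (P : RCSP V S) : ∀ (j : V ⊕ (V × V)) (i : V × S), P.ew j i ≤ P.m := by
  rintro (u | e) ⟨v, σ⟩ <;> simp only [RCSP.ew]
  · split <;> omega
  · split
    · rename_i hE
      split
      · exact P.pifst_le _ hE _
      · split
        · exact Nat.sub_le _ _
        · omega
    · omega

lemma coef_lt_Q (P : RCSP V S) (F : ℕ) (hF1 : 1 ≤ F) (hFV : F ≤ Fintype.card V)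
    (hS : 0 < Fintype.card S) (Sol : Finset (V × S)) (j : V ⊕ (V × V)) :
    ∑ i ∈ Sol, P.ew j i < P.Q F := by
  have h1 : ∑ i ∈ Sol, P.ew j i ≤ Sol.card * P.m := by
    calc ∑ i ∈ Sol, P.ew j i ≤ ∑ _i ∈ Sol, P.m :=
          Finset.sum_le_sum (fun i _ => ew_le_m P j i)
      _ = Sol.card * P.m := by rw [Finset.sum_const, smul_eq_mul]
  have h2 : Sol.card ≤ Fintype.card V * Fintype.card S := by
    simpa [Fintype.card_prod] using Finset.card_le_univ Sol
  have hV : 0 < Fintype.card V := lt_of_lt_of_le hF1 hFV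
  have hm := P.m_pos
  have hF2 : 1 ≤ F ^ 2 := Nat.one_le_pow _ _ hF1
  have hpos : 0 < Fintype.card V * Fintype.card S * P.m := by positivity
  calc ∑ i ∈ Sol, P.ew j i ≤ Sol.card * P.m := h1
    _ ≤ Fintype.card V * Fintype.card S * P.m := Nat.mul_le_mul_right _ h2
    _ < 3 * F ^ 2 * (Fintype.card V * Fintype.card S * P.m) :=
        (Nat.lt_mul_iff_one_lt_left hpos).2 (by linarith)
    _ = P.Q F := by unfold RCSP.Q; ring

lemma m_lt_Q (P : RCSP V S) (F : ℕ) (hF1 : 1 ≤ F) (hFV : F ≤ Fintype.card V)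
    (hS : 0 < Fintype.card S) : P.m < P.Q F := by
  have hV : 0 < Fintype.card V := lt_of_lt_of_le hF1 hFV
  have hm := P.m_pos
  have hF2 : 1 ≤ F ^ 2 := Nat.one_le_pow _ _ hF1
  have hpos : 0 < Fintype.card V * Fintype.card S * P.m := by positivity
  calc P.m = 1 * P.m := (one_mul _).symm
    _ ≤ Fintype.card V * Fintype.card S * P.m :=
        Nat.mul_le_mul_right _ (Nat.one_le_iff_ne_zero.2 (by positivity))
    _ < 3 * F ^ 2 * (Fintype.card V * Fintype.card S * P.m) :=
        (Nat.lt_mul_iff_one_lt_left hpos).2 (by linarith)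
    _ = P.Q F := by unfold RCSP.Q; ring

lemma Q_pos (P : RCSP V S) (F : ℕ) (hF1 : 1 ≤ F) (hFV : F ≤ Fintype.card V)
    (hS : 0 < Fintype.card S) : 0 < P.Q F :=
  lt_of_le_of_lt (Nat.zero_le _) (m_lt_Q P F hF1 hFV hS)

lemma term_le_M (P : RCSP V S) (F : ℕ) (hF1 : 1 ≤ F) (hFV : F ≤ Fintype.card V)
    (hS : 0 < Fintype.card S) {t : ℕ} (ht : t ≤ F) : P.m * P.Q F ^ t ≤ P.Mbig F := by
  have hQ : 0 < P.Q F := Q_pos P F hF1 hFV hS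
  have hm : P.m ≤ P.Q F := le_of_lt (m_lt_Q P F hF1 hFV hS)
  have h1 : P.m ≤ P.Q F ^ F := le_trans hm (Nat.le_self_pow (by omega) _)
  have h2 : P.Q F ^ t ≤ P.Q F ^ F := Nat.pow_le_pow_right hQ ht
  calc P.m * P.Q F ^ t ≤ P.Q F ^ F * P.Q F ^ F := Nat.mul_le_mul h1 h2
    _ = P.Mbig F := by rw [RCSP.Mbig, two_mul, pow_add]


lemma card_Dblock_le_N (P : RCSP V S) {r : ℕ} (idx : V ⊕ (V × V) → Fin r) (ℓ : Fin r) :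
    (P.Dblock idx ℓ).card ≤ P.N idx ℓ := by
  classical
  set s := P.Dblock idx ℓ with hs
  have hsplit := Finset.card_filter_add_card_filter_not
    (s := s) (p := fun j => j.isLeft)
  have h1 : (s.filter (fun j => j.isLeft)).card
      ≤ ∑ v : V, (if idx (Sum.inl v) = ℓ then 1 else 0) := by
    have hsub : s.filter (fun j => j.isLeft)
        ⊆ (Finset.univ.filter (fun v : V => idx (Sum.inl v) = ℓ)).image Sum.inl := by
      rintro (u | e) hj
      · simp only [hs, RCSP.Dblock, Finset.mem_filter] at hj
        simp only [Finset.mem_image, Finset.mem_filter, Finset.mem_univ, true_and]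
        exact ⟨u, hj.1.2, rfl⟩
      · simp at hj
    calc (s.filter (fun j => j.isLeft)).card
        ≤ ((Finset.univ.filter (fun v : V => idx (Sum.inl v) = ℓ)).image Sum.inl).card :=
          Finset.card_le_card hsub
      _ = (Finset.univ.filter (fun v : V => idx (Sum.inl v) = ℓ)).card :=
          Finset.card_image_of_injective _ Sum.inl_injective
      _ = ∑ v : V, (if idx (Sum.inl v) = ℓ then 1 else 0) := Finset.card_filter _ _
  have h2 : (s.filter (fun j => ¬ j.isLeft)).card
      ≤ ∑ v : V, ((P.adj v).filter (fun e => idx (Sum.inr e) = ℓ)).card := by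
    rw [← Finset.card_sigma]
    apply Finset.card_le_card_of_injOn
      (fun j => ⟨(Sum.elim id Prod.fst j), (Sum.elim (fun u => (u, u)) id j)⟩)
    · rintro (u | e) hj
      · simp at hj
      · replace hj : Sum.inr e ∈ s.filter (fun j => ¬ j.isLeft) := hj
        simp only [hs, RCSP.Dblock, RCSP.Dset, Finset.mem_filter, Finset.mem_union,
          Finset.mem_image, Finset.mem_univ, true_and] at hj
        obtain ⟨⟨hmem, hidx⟩, -⟩ := hj
        have heE : e ∈ P.E := by
          rcases hmem with ⟨a, h⟩ | ⟨a, haE, h⟩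
          · simp at h
          · rwa [← Sum.inr_injective h]
        simp [RCSP.adj, Finset.mem_sigma, Finset.mem_filter, heE, hidx]
    · rintro (u | e) hj (u' | e') hj' heq
      · simp at hj
      · simp at hj
      · simp at hj'
      · simpa using congrArg Sigma.snd heq
  have hN : P.N idx ℓ = (∑ v : V, ((P.adj v).filter (fun e => idx (Sum.inr e) = ℓ)).card)
      + ∑ v : V, (if idx (Sum.inl v) = ℓ then 1 else 0) := by
    rw [RCSP.N, ← Finset.sum_add_distrib]
    simp [RCSP.J]
  omega

lemma cost1_le_MJ (P : RCSP V S) (F : ℕ) {r : ℕ} (idx : V ⊕ (V × V) → Fin r)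
    (ord : V ⊕ (V × V) → ℕ) (hset : P.EmbedSetting F idx ord)
    (hS : 0 < Fintype.card S) (ℓ : Fin r) (i : V × S) :
    P.cost1 F idx ord ℓ i ≤ P.Mbig F * P.J idx ℓ i.1 := by
  classical
  obtain ⟨-, hF1, hFV, hcard, hbij⟩ := hset
  set s := P.Dblock idx ℓ with hs
  have hstep : P.cost1 F idx ord ℓ i
      = ∑ j ∈ s.filter (fun j => touches i.1 j), P.ew j i * P.Q F ^ ord j := by
    rw [RCSP.cost1]
    rw [Finset.sum_filter_of_ne]
    rintro (u | e) hj hne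
    · obtain ⟨v, σ⟩ := i
      simp only [RCSP.ew] at hne
      by_cases h : v = u
      · simp [touches, h]
      · simp [h] at hne
    · obtain ⟨v, σ⟩ := i
      simp only [RCSP.ew] at hne
      by_cases hE : e ∈ P.E
      · simp only [if_pos hE] at hne
        by_cases h1 : e.1 = v
        · simp [touches, h1]
        · by_cases h2 : e.2 = v
          · simp [touches, h2]
          · simp [h1, h2] at hne
      · simp [hE] at hne
  have hterm : ∀ j ∈ s.filter (fun j => touches i.1 j),
      P.ew j i * P.Q F ^ ord j ≤ P.Mbig F := by
    intro j hj
    have hjs : j ∈ s := (Finset.mem_filter.1 hj).1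
    have hordmem := (hbij ℓ).mapsTo (Finset.mem_coe.2 hjs)
    have hord : ord j ≤ F := le_trans hordmem.2 (hcard ℓ)
    calc P.ew j i * P.Q F ^ ord j ≤ P.m * P.Q F ^ ord j :=
          Nat.mul_le_mul_right _ (ew_le_m P j i)
      _ ≤ P.Mbig F := term_le_M P F hF1 hFV hS hord
  have hcnt : (s.filter (fun j => touches i.1 j)).card ≤ P.J idx ℓ i.1 := by
    set X := (((P.adj i.1).filter (fun e => idx (Sum.inr e) = ℓ)).image Sum.inr)
      ∪ (if idx (Sum.inl i.1) = ℓ then ({Sum.inl i.1} : Finset (V ⊕ (V × V))) else ∅) with hX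
    have hsub : s.filter (fun j => touches i.1 j) ⊆ X := by
      rintro (u | e) hj <;>
        simp only [hs, RCSP.Dblock, RCSP.Dset, Finset.mem_filter, Finset.mem_union,
          Finset.mem_image, Finset.mem_univ, true_and, touches] at hj
      · obtain ⟨⟨-, hidx⟩, htc⟩ := hj
        have hu : u = i.1 := by simpa using htc
        subst hu
        rw [hX, if_pos hidx]
        exact Finset.mem_union_right _ (Finset.mem_singleton_self _)
      · obtain ⟨⟨hmem, hidx⟩, htc⟩ := hj
        have heE : e ∈ P.E := by
          rcases hmem with hcon | ⟨e', he', heq⟩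
          · exact absurd hcon (by simp)
          · cases heq; exact he'
        have htv : e.1 = i.1 ∨ e.2 = i.1 := by simpa using htc
        apply Finset.mem_union_left
        exact Finset.mem_image_of_mem _
          (Finset.mem_filter.2 ⟨Finset.mem_filter.2 ⟨heE, htv⟩, hidx⟩)
    calc (s.filter (fun j => touches i.1 j)).card ≤ X.card := Finset.card_le_card hsub
      _ ≤ (((P.adj i.1).filter (fun e => idx (Sum.inr e) = ℓ)).image Sum.inr).card
          + (if idx (Sum.inl i.1) = ℓ then ({Sum.inl i.1} : Finset (V ⊕ (V × V))) else ∅).card :=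
          Finset.card_union_le _ _
      _ ≤ P.J idx ℓ i.1 := by
          rw [RCSP.J, Finset.card_image_of_injective _ Sum.inr_injective]
          split <;> simp
  calc P.cost1 F idx ord ℓ i
      = ∑ j ∈ s.filter (fun j => touches i.1 j), P.ew j i * P.Q F ^ ord j := hstep
    _ ≤ (s.filter (fun j => touches i.1 j)).card • P.Mbig F :=
        Finset.sum_le_card_nsmul _ _ _ hterm
    _ = (s.filter (fun j => touches i.1 j)).card * P.Mbig F := smul_eq_mul ..
    _ ≤ P.J idx ℓ i.1 * P.Mbig F := Nat.mul_le_mul_right _ hcnt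
    _ = P.Mbig F * P.J idx ℓ i.1 := Nat.mul_comm _ _

lemma budget1_le_MN (P : RCSP V S) (F : ℕ) {r : ℕ} (idx : V ⊕ (V × V) → Fin r)
    (ord : V ⊕ (V × V) → ℕ) (hset : P.EmbedSetting F idx ord)
    (hS : 0 < Fintype.card S) (ℓ : Fin r) :
    P.budget1 F idx ord ℓ ≤ P.Mbig F * P.N idx ℓ := by
  obtain ⟨-, hF1, hFV, hcard, hbij⟩ := hset
  have hterm : ∀ j ∈ P.Dblock idx ℓ, P.m * P.Q F ^ ord j ≤ P.Mbig F := by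
    intro j hj
    have hordmem := (hbij ℓ).mapsTo (Finset.mem_coe.2 hj)
    exact term_le_M P F hF1 hFV hS (le_trans hordmem.2 (hcard ℓ))
  calc P.budget1 F idx ord ℓ ≤ (P.Dblock idx ℓ).card • P.Mbig F :=
        Finset.sum_le_card_nsmul _ _ _ hterm
    _ = (P.Dblock idx ℓ).card * P.Mbig F := smul_eq_mul ..
    _ ≤ P.N idx ℓ * P.Mbig F := Nat.mul_le_mul_right _ (card_Dblock_le_N P idx ℓ)
    _ = P.Mbig F * P.N idx ℓ := Nat.mul_comm _ _


lemma tight_ew (P : RCSP V S) (F : ℕ) {r : ℕ} (idx : V ⊕ (V × V) → Fin r)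
    (ord : V ⊕ (V × V) → ℕ) (hset : P.EmbedSetting F idx ord)
    (Sol : Finset (V × S)) (hSol : P.IsEmbedSolution F idx ord Sol)
    (hS : 0 < Fintype.card S) (ℓ : Fin r) (ht : P.Tight idx Sol ℓ) :
    ∀ j ∈ P.Dblock idx ℓ, ∑ i ∈ Sol, P.ew j i = P.m := by
  classical
  obtain ⟨-, hF1, hFV, hcardF, hbij⟩ := id hset
  have hQpos : 0 < P.Q F := Q_pos P F hF1 hFV hS
  have hmQ : P.m < P.Q F := m_lt_Q P F hF1 hFV hS
  set s := P.Dblock idx ℓ with hs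
  -- Step 1: sum of cost1 over Sol equals budget1
  have hMJ : ∀ i ∈ Sol, P.cost1 F idx ord ℓ i ≤ P.Mbig F * P.J idx ℓ i.1 :=
    fun i _ => cost1_le_MJ P F idx ord hset hS ℓ i
  have hsum : (∑ i ∈ Sol, P.cost2 F idx ord ℓ i) + (∑ i ∈ Sol, P.cost1 F idx ord ℓ i)
      = P.Mbig F * P.N idx ℓ := by
    rw [← Finset.sum_add_distrib]
    have hcongr : ∀ i ∈ Sol, P.cost2 F idx ord ℓ i + P.cost1 F idx ord ℓ i
        = P.Mbig F * P.J idx ℓ i.1 := by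
      intro i hi
      rw [RCSP.cost2]
      exact Nat.sub_add_cancel (hMJ i hi)
    rw [Finset.sum_congr rfl hcongr, ← Finset.mul_sum, ht]
  have hb1 := hSol.1 ℓ
  have hb2 := hSol.2 ℓ
  have hble : P.budget1 F idx ord ℓ ≤ P.Mbig F * P.N idx ℓ :=
    budget1_le_MN P F idx ord hset hS ℓ
  rw [RCSP.budget2] at hb2
  have hkey : (∑ i ∈ Sol, P.cost2 F idx ord ℓ i) + P.budget1 F idx ord ℓ
      ≤ P.Mbig F * P.N idx ℓ := (le_tsub_iff_right hble).1 hb2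
  have hc1 : ∑ i ∈ Sol, P.cost1 F idx ord ℓ i = P.budget1 F idx ord ℓ :=
    le_antisymm hb1 (by omega)
  -- Step 2: digit comparison
  have hswap : ∑ j ∈ s, (∑ i ∈ Sol, P.ew j i) * P.Q F ^ ord j
      = ∑ j ∈ s, P.m * P.Q F ^ ord j := by
    have hl : ∑ i ∈ Sol, P.cost1 F idx ord ℓ i
        = ∑ j ∈ s, (∑ i ∈ Sol, P.ew j i) * P.Q F ^ ord j := by
      simp only [RCSP.cost1]
      rw [Finset.sum_comm]
      exact Finset.sum_congr rfl fun j _ => (Finset.sum_mul _ _ _).symm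
    rw [← hl, hc1, RCSP.budget1]
  set k := s.card with hk
  have hmaps : ∀ j ∈ s, ord j ∈ Finset.range (k + 1) := by
    intro j hj
    have h := (hbij ℓ).mapsTo (Finset.mem_coe.2 hj)
    rw [Set.mem_Icc, ← hs] at h
    exact Finset.mem_range.2 (by omega)
  have hinj : Set.InjOn ord ↑s := (hbij ℓ).injOn
  have hfilcard : ∀ t : ℕ, (s.filter (fun j => ord j = t)).card ≤ 1 := by
    intro t
    apply Finset.card_le_one.2
    intro a ha b hb
    have ha' := Finset.mem_filter.1 ha
    have hb' := Finset.mem_filter.1 hb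
    exact hinj (Finset.mem_coe.2 ha'.1) (Finset.mem_coe.2 hb'.1) (ha'.2.trans hb'.2.symm)
  set A : ℕ → ℕ := fun t => ∑ j ∈ s.filter (fun j => ord j = t), (∑ i ∈ Sol, P.ew j i)
    with hA
  set B : ℕ → ℕ := fun t => ∑ j ∈ s.filter (fun j => ord j = t), P.m with hB
  have hgroup : ∀ (c : (V ⊕ (V × V)) → ℕ),
      ∑ t ∈ Finset.range (k + 1), (∑ j ∈ s.filter (fun j => ord j = t), c j) * P.Q F ^ t
      = ∑ j ∈ s, c j * P.Q F ^ ord j := by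
    intro c
    rw [← Finset.sum_fiberwise_of_maps_to hmaps (fun j => c j * P.Q F ^ ord j)]
    apply Finset.sum_congr rfl
    intro t _
    rw [Finset.sum_mul]
    apply Finset.sum_congr rfl
    intro j hj
    rw [(Finset.mem_filter.1 hj).2]
  have hAB : ∑ t ∈ Finset.range (k + 1), A t * P.Q F ^ t
      = ∑ t ∈ Finset.range (k + 1), B t * P.Q F ^ t := by
    simp only [hA, hB]
    rw [hgroup, hgroup]
    exact hswap
  have hAlt : ∀ t, t < k + 1 → A t < P.Q F := by
    intro t _
    have h1 : A t ≤ (s.filter (fun j => ord j = t)).card * (P.Q F - 1) := by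
      simp only [hA]
      calc ∑ j ∈ s.filter (fun j => ord j = t), (∑ i ∈ Sol, P.ew j i)
          ≤ (s.filter (fun j => ord j = t)).card • (P.Q F - 1) :=
            Finset.sum_le_card_nsmul _ _ _ (fun j _ => by
              have := coef_lt_Q P F hF1 hFV hS Sol j; omega)
        _ = (s.filter (fun j => ord j = t)).card * (P.Q F - 1) := smul_eq_mul ..
    have h2 := hfilcard t
    have h3 : (s.filter (fun j => ord j = t)).card * (P.Q F - 1) ≤ 1 * (P.Q F - 1) :=
      Nat.mul_le_mul_right _ h2
    omega
  have hBlt : ∀ t, t < k + 1 → B t < P.Q F := by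
    intro t _
    have h1 : B t ≤ (s.filter (fun j => ord j = t)).card * P.m := by
      simp only [hB, Finset.sum_const, smul_eq_mul]
      exact le_refl _
    have h2 := hfilcard t
    have h3 : (s.filter (fun j => ord j = t)).card * P.m ≤ 1 * P.m :=
      Nat.mul_le_mul_right _ h2
    omega
  have hdig := digits_unique (P.Q F) (k + 1) A B hAlt hBlt hAB
  intro j hj
  have hordj := (hbij ℓ).mapsTo (Finset.mem_coe.2 hj)
  have hfil : s.filter (fun j' => ord j' = ord j) = {j} := by
    apply Finset.eq_singleton_iff_unique_mem.2
    refine ⟨Finset.mem_filter.2 ⟨hj, rfl⟩, ?_⟩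
    intro x hx
    have hx' := Finset.mem_filter.1 hx
    exact hinj (Finset.mem_coe.2 hx'.1) (Finset.mem_coe.2 hj) hx'.2
  rw [Set.mem_Icc, ← hs] at hordj
  have := hdig (ord j) (by omega)
  simp only [hA, hB] at this
  simp only [hfil, Finset.sum_singleton] at this
  exact this
/-- In the setting of the dimension embedding reduction, let `Sol` be a
solution of `I(Π,F)` and let `V*` be as in Statement 8.  The partial assignment `φ`
defined by `φ v = σ_v` (the unique symbol with `(v, σ_v) ∈ Sol`) for `v ∈ V*` and
`φ v = ⊥` otherwise, is a consistent partial assignment for `Π`.  (The assignment `φ`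
is characterized by: assigned values come from `Sol` and assigned vertices lie in `V*`,
and every vertex of `V*` is assigned.) -/
theorem embed_assignment_consistent
    {V S : Type} [Fintype V] [DecidableEq V] [Fintype S] [DecidableEq S]
    (P : RCSP V S) (F : ℕ) {r : ℕ} (idx : V ⊕ (V × V) → Fin r)
    (ord : V ⊕ (V × V) → ℕ) (hset : P.EmbedSetting F idx ord)
    (Sol : Finset (V × S)) (hSol : P.IsEmbedSolution F idx ord Sol)
    (φ : V → Option S)
    (hφ₁ : ∀ (v : V) (σ : S), φ v = some σ → P.InVstar idx Sol v ∧ (v, σ) ∈ Sol)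
    (hφ₂ : ∀ v : V, P.InVstar idx Sol v → (φ v).isSome) :
    P.Consistent φ := by
  classical
  intro e he a b hea heb
  obtain ⟨hVa, hSa⟩ := hφ₁ e.1 a hea
  obtain ⟨hVb, hSb⟩ := hφ₁ e.2 b heb
  have hS : 0 < Fintype.card S := Fintype.card_pos_iff.2 ⟨a⟩
  have hne : e.1 ≠ e.2 := P.ne_of_mem e he
  -- every Vstar vertex carries a unique item of Sol
  have huniq : ∀ (v : V) (σ : S), P.InVstar idx Sol v → (v, σ) ∈ Sol →
      Sol.filter (fun i => i.1 = v) = {(v, σ)} := by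
    intro v σ hv hvσ
    have hmem : Sum.inl v ∈ P.Dblock idx (idx (Sum.inl v)) := by
      simp [RCSP.Dblock, RCSP.Dset]
    have h := tight_ew P F idx ord hset Sol hSol hS (idx (Sum.inl v)) hv.1 (Sum.inl v) hmem
    have hsum : ∑ i ∈ Sol, P.ew (Sum.inl v) i
        = P.m * (Sol.filter (fun i => i.1 = v)).card := by
      rw [Finset.card_filter, Finset.mul_sum]
      apply Finset.sum_congr rfl
      rintro ⟨u, τ⟩ _
      simp only [RCSP.ew]
      split <;> simp
    rw [hsum] at h
    have hm := P.m_pos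
    have hcard : (Sol.filter (fun i => i.1 = v)).card = 1 :=
      Nat.eq_of_mul_eq_mul_left hm (by rw [mul_one]; exact h)
    obtain ⟨x, hx⟩ := Finset.card_eq_one.1 hcard
    have hvx : (v, σ) ∈ Sol.filter (fun i => i.1 = v) :=
      Finset.mem_filter.2 ⟨hvσ, rfl⟩
    rw [hx] at hvx ⊢
    rw [← Finset.mem_singleton.1 hvx]
  -- the edge constraint is tight
  have hadj : e ∈ P.adj e.1 := by simp [RCSP.adj, he]
  have htight := hVa.2 e hadj
  have hmem : Sum.inr e ∈ P.Dblock idx (idx (Sum.inr e)) := by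
    rw [RCSP.Dblock, Finset.mem_filter]
    refine ⟨?_, rfl⟩
    rw [RCSP.Dset]
    exact Finset.mem_union_right _ (Finset.mem_image_of_mem _ he)
  have hE := tight_ew P F idx ord hset Sol hSol hS (idx (Sum.inr e)) htight (Sum.inr e) hmem
  have hsplit : ∀ i ∈ Sol, P.ew (Sum.inr e) i =
      (if i.1 = e.1 then P.pifst e i.2 else 0)
        + (if i.1 = e.2 then P.m - P.pisnd e i.2 else 0) := by
    rintro ⟨u, τ⟩ _
    simp only [RCSP.ew, if_pos he]
    by_cases h1 : u = e.1
    · have h3 : ¬ (u = e.2) := fun hc => hne (h1 ▸ hc)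
      rw [if_pos h1.symm, if_pos h1, if_neg h3]
      omega
    · by_cases h2 : u = e.2
      · have h3 : ¬ (e.1 = u) := fun hc => h1 hc.symm
        rw [if_neg h3, if_pos h2.symm, if_neg h1, if_pos h2]
        omega
      · have h3 : ¬ (e.1 = u) := fun hc => h1 hc.symm
        have h4 : ¬ (e.2 = u) := fun hc => h2 hc.symm
        rw [if_neg h3, if_neg h4, if_neg h1, if_neg h2]
  have hcomp : ∑ i ∈ Sol, P.ew (Sum.inr e) i
      = (∑ i ∈ Sol.filter (fun i => i.1 = e.1), P.pifst e i.2)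
        + (∑ i ∈ Sol.filter (fun i => i.1 = e.2), (P.m - P.pisnd e i.2)) := by
    rw [Finset.sum_congr rfl hsplit, Finset.sum_add_distrib,
      ← Finset.sum_filter, ← Finset.sum_filter]
  rw [hcomp, huniq e.1 a hVa hSa, huniq e.2 b hVb hSb,
    Finset.sum_singleton, Finset.sum_singleton] at hE
  simp only at hE
  have h1 := P.pisnd_le e he b
  have h2 := P.pisnd_pos e he b
  have h3 := P.pifst_pos e he a
  omega
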